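/- For every real p ≥ 1 there exists a constant C > 0 such that ∫_{0}^{τ} |λ(ϑ₁, t) − λ(ϑ₂, t)|^{2p} dt ≤ C·|ϑ₁ − ϑ₂|^{2pκ + 1} for all ϑ₁, ϑ₂ ∈ Θ. -/
import Mathlib


open MeasureTheory Real Set Filter

/-- The cusp signal shape: `ψ(x) = (x/δ)^κ` for `0 < x < δ`, `1` for `x ≥ δ`, `0` for `x ≤ 0`. -/
noncomputable def psi (δ κ : ℝ) (x : ℝ) : ℝ :=
  if δ ≤ x then 1 else if 0 < x then (x / δ) ^ κ else 0

/-- Theoretical intensity `λ(ϑ, t) = S ψ(t − ϑ) + λ₀`. -/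
noncomputable def lamT (S lam0 δ κ : ℝ) (ϑ t : ℝ) : ℝ :=
  S * psi δ κ (t - ϑ) + lam0

/-- Real intensity `λ*(ϑ₀, t) = (S + h) ψ(t − ϑ₀) + λ₀`. -/
noncomputable def lamR (S h lam0 δ κ : ℝ) (ϑ₀ t : ℝ) : ℝ :=
  (S + h) * psi δ κ (t - ϑ₀) + lam0

/-- The Kullback–Leibler divergence `J(ϑ)`. -/
noncomputable def JKL (S h lam0 δ κ τ ϑ₀ : ℝ) (ϑ : ℝ) : ℝ :=
  ∫ t in (min ϑ ϑ₀)..τ,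
    (lamT S lam0 δ κ ϑ t / lamR S h lam0 δ κ ϑ₀ t - 1 -
      Real.log (lamT S lam0 δ κ ϑ t / lamR S h lam0 δ κ ϑ₀ t)) *
      lamR S h lam0 δ κ ϑ₀ t

lemma psi_nonneg {δ : ℝ} (hδ : 0 < δ) (κ x : ℝ) : 0 ≤ psi δ κ x := by
  unfold psi
  split_ifs <;> positivity

lemma psi_le_one {δ κ : ℝ} (hδ : 0 < δ) (hκ : 0 < κ) (x : ℝ) : psi δ κ x ≤ 1 := by
  unfold psi
  split_ifs with h1 h2
  · exact le_refl _
  · exact Real.rpow_le_one (by positivity) (by rw [div_le_one hδ]; linarith) hκ.le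
  · norm_num

lemma psi_le_rpow {δ κ : ℝ} (hδ : 0 < δ) (hκ : 0 < κ) {x : ℝ} (hx : 0 < x) :
    psi δ κ x ≤ (x / δ) ^ κ := by
  unfold psi
  split_ifs with h1
  · exact Real.one_le_rpow (by rw [le_div_iff₀ hδ]; linarith) hκ.le
  · exact le_refl _

lemma psi_mono {δ κ : ℝ} (hδ : 0 < δ) (hκ : 0 < κ) : Monotone (psi δ κ) := by
  intro x y hxy
  unfold psi
  split_ifs with h1 h2 h3 h4 h5 h6 h7 h8
  · exact le_refl _
  · linarith
  · linarith
  · exact Real.rpow_le_one (by positivity) (by rw [div_le_one hδ]; linarith) hκ.le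
  · exact Real.rpow_le_rpow (by positivity) (by gcongr) hκ.le
  · linarith
  · norm_num
  · positivity
  · exact le_refl _

lemma psi_eq_one {δ κ x : ℝ} (h : δ ≤ x) : psi δ κ x = 1 := if_pos h

lemma psi_eq_zero {δ κ x : ℝ} (hδ : 0 < δ) (h : x ≤ 0) : psi δ κ x = 0 := by
  unfold psi
  rw [if_neg (by linarith), if_neg (by linarith)]

@[fun_prop]
lemma measurable_psi (δ κ : ℝ) : Measurable (psi δ κ) := by
  unfold psi
  apply Measurable.ite (measurableSet_le measurable_const measurable_id)
    measurable_const
  apply Measurable.ite (measurableSet_lt measurable_const measurable_id)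
    (by fun_prop) measurable_const

-- concavity bound
lemma rpow_sub_le {κ y x : ℝ} (hκ0 : 0 < κ) (hκ1 : κ < 1) (hy : 0 < y) (hxy : y ≤ x) :
    x ^ κ - y ^ κ ≤ κ * y ^ (κ - 1) * (x - y) := by
  have key : ‖x ^ κ - y ^ κ‖ ≤ (κ * y ^ (κ - 1)) * ‖x - y‖ := by
    apply Convex.norm_image_sub_le_of_norm_hasDerivWithin_le
      (f := fun t => t ^ κ) (f' := fun t => κ * t ^ (κ - 1)) (s := Set.Icc y x)
    · intro t ht
      exact (Real.hasDerivAt_rpow_const (Or.inl (by nlinarith [ht.1]))).hasDerivWithinAt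
    · intro t ht
      have ht0 : (0:ℝ) < t := lt_of_lt_of_le hy ht.1
      rw [Real.norm_eq_abs, abs_of_nonneg (by positivity)]
      have : t ^ (κ - 1) ≤ y ^ (κ - 1) :=
        Real.rpow_le_rpow_of_nonpos hy ht.1 (by linarith)
      nlinarith
    · exact convex_Icc _ _
    · exact ⟨le_refl _, hxy⟩
    · exact ⟨hxy, le_refl _⟩
  rw [Real.norm_eq_abs, Real.norm_eq_abs] at key
  calc x ^ κ - y ^ κ ≤ |x ^ κ - y ^ κ| := le_abs_self _
    _ ≤ κ * y ^ (κ - 1) * |x - y| := key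
    _ = κ * y ^ (κ - 1) * (x - y) := by rw [abs_of_nonneg (by linarith)]

/-- pointwise bound function for the psi increment -/
noncomputable def Bf (δ κ h : ℝ) (x : ℝ) : ℝ :=
  if x ≤ 0 then 0
  else if x < 2 * h then (2 * h / δ) ^ κ
  else if x < δ + h then κ * δ ^ (-κ) * h * (x / 2) ^ (κ - 1)
  else 0

lemma Bf_nonneg {δ κ h : ℝ} (hδ : 0 < δ) (hκ : 0 < κ) (hh : 0 < h) (x : ℝ) :
    0 ≤ Bf δ κ h x := by
  unfold Bf; split_ifs with a b c
  · exact le_refl 0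
  · positivity
  · push_neg at a
    have : (0:ℝ) ≤ (x / 2) ^ (κ - 1) := Real.rpow_nonneg (by linarith) _
    have : (0:ℝ) ≤ δ ^ (-κ) := Real.rpow_nonneg hδ.le _
    positivity
  · exact le_refl 0

@[fun_prop]
lemma measurable_Bf (δ κ h : ℝ) : Measurable (Bf δ κ h) := by
  unfold Bf
  apply Measurable.ite (measurableSet_le measurable_id measurable_const) measurable_const
  apply Measurable.ite (measurableSet_lt measurable_id measurable_const) measurable_const
  apply Measurable.ite (measurableSet_lt measurable_id measurable_const) (by fun_prop)
    measurable_const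

lemma psi_diff_le {δ κ h : ℝ} (hδ : 0 < δ) (hκ0 : 0 < κ) (hκ1 : κ < 1) (hh : 0 < h)
    (x : ℝ) : psi δ κ x - psi δ κ (x - h) ≤ Bf δ κ h x := by
  unfold Bf
  split_ifs with h1 h2 h3
  · rw [psi_eq_zero hδ h1, psi_eq_zero hδ (by linarith)]; norm_num
  · push_neg at h1
    have b1 : psi δ κ x ≤ (x / δ) ^ κ := psi_le_rpow hδ hκ0 h1
    have b2 : (x / δ) ^ κ ≤ (2 * h / δ) ^ κ :=
      Real.rpow_le_rpow (by positivity) (by gcongr) hκ0.le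
    have b3 : 0 ≤ psi δ κ (x - h) := psi_nonneg hδ _ _
    linarith
  · -- 2h ≤ x < δ + h
    push_neg at h1 h2
    have hxh0 : 0 < x - h := by linarith
    have hxhδ : x - h < δ := by linarith
    have e2 : psi δ κ (x - h) = ((x - h) / δ) ^ κ := by
      unfold psi; rw [if_neg (by linarith), if_pos hxh0]
    have b1 : psi δ κ x ≤ (x / δ) ^ κ := psi_le_rpow hδ hκ0 (by linarith)
    have d1 : (x / δ) ^ κ = x ^ κ / δ ^ κ := Real.div_rpow (le_of_lt h1) hδ.le κ
    have d2 : ((x - h) / δ) ^ κ = (x - h) ^ κ / δ ^ κ := Real.div_rpow hxh0.le hδ.le κ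
    have key : x ^ κ - (x - h) ^ κ ≤ κ * (x - h) ^ (κ - 1) * h := by
      have := rpow_sub_le hκ0 hκ1 hxh0 (by linarith : x - h ≤ x)
      have e : x - (x - h) = h := by ring
      rw [e] at this; exact this
    have mono : (x - h) ^ (κ - 1) ≤ (x / 2) ^ (κ - 1) :=
      Real.rpow_le_rpow_of_nonpos (by linarith) (by linarith) (by linarith)
    have hδκ : (0:ℝ) < δ ^ κ := Real.rpow_pos_of_pos hδ κ
    have hneg : δ ^ (-κ) = 1 / δ ^ κ := by
      rw [Real.rpow_neg hδ.le, one_div]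
    calc psi δ κ x - psi δ κ (x - h) ≤ (x / δ) ^ κ - ((x - h) / δ) ^ κ := by
            rw [e2]; linarith
      _ = (x ^ κ - (x - h) ^ κ) / δ ^ κ := by rw [d1, d2]; ring
      _ ≤ (κ * (x / 2) ^ (κ - 1) * h) / δ ^ κ := by
            gcongr
            calc x ^ κ - (x - h) ^ κ ≤ κ * (x - h) ^ (κ - 1) * h := key
              _ ≤ κ * (x / 2) ^ (κ - 1) * h := by gcongr
      _ = κ * δ ^ (-κ) * h * (x / 2) ^ (κ - 1) := by rw [hneg]; ring
  · -- x ≥ δ + h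
    push_neg at h1 h2 h3
    rw [psi_eq_one (by linarith), psi_eq_one (by linarith)]
    norm_num

lemma intervalIntegrable_of_bounded {f : ℝ → ℝ} (hf : Measurable f) {M : ℝ}
    (hM : ∀ t, |f t| ≤ M) (a b : ℝ) : IntervalIntegrable f volume a b := by
  rw [intervalIntegrable_iff]
  exact Measure.integrableOn_of_bounded (by rw [Set.uIoc]; exact measure_Ioc_lt_top.ne)
    hf.aestronglyMeasurable (Filter.Eventually.of_forall fun t => hM t)

lemma Bf_le_head {δ κ h x : ℝ} (hδ : 0 < δ) (hκ0 : 0 < κ) (hκ1 : κ < 1) (hh0 : 0 < h)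
    (hx : x ≤ 2*h) : Bf δ κ h x ≤ (2*h/δ)^κ := by
  unfold Bf
  split_ifs with a b c
  · positivity
  · exact le_refl _
  · push_neg at a b
    have hxe : x = 2*h := le_antisymm hx b
    rw [hxe]
    have e1 : (2*h/2 : ℝ) = h := by ring
    rw [e1]
    have e2 : (2*h/δ)^κ = 2^κ * h^κ * δ^(-κ) := by
      rw [Real.div_rpow (by linarith) hδ.le, Real.mul_rpow (by norm_num) hh0.le,
        Real.rpow_neg hδ.le, div_eq_mul_inv]
    have e3 : κ*δ^(-κ)*h*h^(κ-1) = κ * h^κ * δ^(-κ) := by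
      have : h^κ = h^(κ-1) * h := by
        rw [← Real.rpow_add_one hh0.ne']; norm_num
      rw [this]; ring
    rw [e2, e3]
    have h2κ : (1:ℝ) ≤ 2^κ := Real.one_le_rpow (by norm_num) hκ0.le
    have hhκ : (0:ℝ) ≤ h^κ := Real.rpow_nonneg hh0.le _
    have hdκ : (0:ℝ) ≤ δ^(-κ) := Real.rpow_nonneg hδ.le _
    nlinarith [mul_le_mul_of_nonneg_right (show κ ≤ 2^κ by linarith)
      (mul_nonneg hhκ hdκ)]
  · positivity

lemma Bf_le_tail {δ κ h x : ℝ} (hδ : 0 < δ) (hκ0 : 0 < κ) (hh0 : 0 < h)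
    (hx : 2*h ≤ x) : Bf δ κ h x ≤ κ*δ^(-κ)*h*(x/2)^(κ-1) := by
  unfold Bf
  split_ifs with a b c
  · linarith
  · linarith
  · exact le_refl _
  · exact mul_nonneg (mul_nonneg (mul_nonneg hκ0.le (Real.rpow_nonneg hδ.le _)) hh0.le)
      (Real.rpow_nonneg (by linarith) _)

lemma Bf_eq_zero_of_nonpos {δ κ h x : ℝ} (hx : x ≤ 0) : Bf δ κ h x = 0 := by
  unfold Bf; rw [if_pos hx]

lemma Bf_eq_zero_of_ge {δ κ h x : ℝ} (hh0 : 0 < h) (hhδ : h ≤ δ) (hx : δ + h ≤ x) :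
    Bf δ κ h x = 0 := by
  unfold Bf
  rw [if_neg (by push_neg; linarith), if_neg (by push_neg; linarith),
    if_neg (by push_neg; linarith)]

lemma main_est {S δ κ p u h τ : ℝ} (hS : 0 < S) (hδ : 0 < δ) (hκ0 : 0 < κ)
    (hκ1 : κ < 1/2) (hp : 1 ≤ p) (hh0 : 0 < h) (hhδ : h ≤ δ) (hu : 0 < u)
    (huτ : u + h + δ ≤ τ) :
    ∫ t in (0:ℝ)..τ, |S * (psi δ κ (t - u) - psi δ κ (t - u - h))| ^ (2*p)
      ≤ (2 * S^(2*p) * (2/δ)^(2*p*κ)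
          + (S*κ*δ^(-κ))^(2*p) * 2 / (2*p*(1-κ) - 1)) * h^(2*p*κ+1) := by
  have hκ1' : κ < 1 := by linarith
  have hm : 0 < 2*p*(1-κ) - 1 := by nlinarith
  set q : ℝ := (κ - 1) * (2*p) with hq
  have hq1 : q + 1 = -(2*p*(1-κ) - 1) := by rw [hq]; ring
  have hqneg : q + 1 < 0 := by rw [hq1]; linarith
  set F : ℝ → ℝ := fun t => |S * (psi δ κ (t - u) - psi δ κ (t - u - h))| ^ (2*p) with hF
  set G : ℝ → ℝ := fun t => (S * Bf δ κ h (t - u)) ^ (2*p) with hG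
  have hp0 : (0:ℝ) < 2*p := by linarith
  -- pointwise comparison
  have hFG : ∀ t, F t ≤ G t := by
    intro t
    have h1 : psi δ κ (t - u - h) ≤ psi δ κ (t - u) := psi_mono hδ hκ0 (by linarith)
    have h2 : psi δ κ (t - u) - psi δ κ (t - u - h) ≤ Bf δ κ h (t - u) := by
      have := psi_diff_le hδ hκ0 hκ1' hh0 (t - u)
      have e : t - u - h = (t - u) - h := by ring
      rw [e]; exact this
    rw [hF, hG]
    simp only
    rw [abs_of_nonneg (by nlinarith)]
    exact Real.rpow_le_rpow (by nlinarith) (by nlinarith) hp0.le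
  -- integrability
  have measF : Measurable F := by rw [hF]; fun_prop
  have measG : Measurable G := by rw [hG]; fun_prop
  have hBfle : ∀ x, Bf δ κ h x ≤ max ((2*h/δ)^κ) (κ*δ^(-κ)*h*h^(κ-1)) := by
    intro x
    unfold Bf
    split_ifs with a b c
    · exact le_trans (Real.rpow_nonneg (by positivity) κ) (le_max_left _ _)
    · exact le_max_left _ _
    · push_neg at a b
      refine le_trans ?_ (le_max_right _ _)
      have e1 : (x/2)^(κ-1) ≤ h^(κ-1) :=
        Real.rpow_le_rpow_of_nonpos hh0 (by linarith) (by linarith)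
      have e0 : (0:ℝ) ≤ κ*δ^(-κ)*h :=
        mul_nonneg (mul_nonneg hκ0.le (Real.rpow_nonneg hδ.le _)) hh0.le
      exact mul_le_mul_of_nonneg_left e1 e0
    · exact le_trans (Real.rpow_nonneg (by positivity) κ) (le_max_left _ _)
  have intF : ∀ a b : ℝ, IntervalIntegrable F volume a b := by
    intro a b
    apply intervalIntegrable_of_bounded measF (M := S ^ (2*p))
    intro t
    rw [abs_of_nonneg (Real.rpow_nonneg (abs_nonneg _) _)]
    apply Real.rpow_le_rpow (abs_nonneg _) ?_ hp0.le
    rw [abs_mul, abs_of_pos hS]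
    have h1 := psi_nonneg hδ κ (t - u)
    have h2 := psi_nonneg hδ κ (t - u - h)
    have h3 := psi_le_one hδ hκ0 (t - u)
    have h4 := psi_le_one hδ hκ0 (t - u - h)
    have : |psi δ κ (t - u) - psi δ κ (t - u - h)| ≤ 1 := by
      rw [abs_le]; constructor <;> linarith
    nlinarith
  have intG : ∀ a b : ℝ, IntervalIntegrable G volume a b := by
    intro a b
    set M := max ((2*h/δ)^κ) (κ*δ^(-κ)*h*h^(κ-1)) with hM
    have hM0 : 0 ≤ M := le_trans (Real.rpow_nonneg (by positivity) κ) (le_max_left _ _)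
    apply intervalIntegrable_of_bounded measG (M := (S*M) ^ (2*p))
    intro t
    have hB0 := Bf_nonneg hδ hκ0 hh0 (t - u)
    rw [abs_of_nonneg (Real.rpow_nonneg (by nlinarith) _)]
    apply Real.rpow_le_rpow (by nlinarith) ?_ hp0.le
    have := hBfle (t - u)
    nlinarith
  -- ordering facts
  have hτ0 : (0:ℝ) ≤ τ := by linarith
  have ho1 : (0:ℝ) ≤ u := hu.le
  have ho2 : u ≤ u + 2*h := by linarith
  have ho3 : u + 2*h ≤ u + h + δ := by linarith
  have ho4 : u + h + δ ≤ τ := huτ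
  have step1 : ∫ t in (0:ℝ)..τ, F t ≤ ∫ t in (0:ℝ)..τ, G t :=
    intervalIntegral.integral_mono_on hτ0 (intF 0 τ) (intG 0 τ) (fun t _ => hFG t)
  have split : ∫ t in (0:ℝ)..τ, G t =
      (((∫ t in (0:ℝ)..u, G t) + ∫ t in u..(u+2*h), G t)
        + ∫ t in (u+2*h)..(u+h+δ), G t) + ∫ t in (u+h+δ)..τ, G t := by
    rw [intervalIntegral.integral_add_adjacent_intervals (intG 0 u) (intG u (u+2*h)),
      intervalIntegral.integral_add_adjacent_intervals (intG 0 (u+2*h)) (intG (u+2*h) (u+h+δ)),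
      intervalIntegral.integral_add_adjacent_intervals (intG 0 (u+h+δ)) (intG (u+h+δ) τ)]
  have hG0 : ∀ x : ℝ, Bf δ κ h x = 0 → G (x + u) = 0 := by
    intro x hx
    rw [hG]; simp only [add_sub_cancel_right, hx, mul_zero]
    exact Real.zero_rpow (by positivity)
  have piece0 : ∫ t in (0:ℝ)..u, G t = 0 := by
    rw [intervalIntegral.integral_congr (g := fun _ => (0:ℝ)) ?_, intervalIntegral.integral_const,
      smul_zero]
    intro t ht
    rw [Set.uIcc_of_le ho1] at ht
    have : G t = G ((t - u) + u) := by norm_num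
    rw [this]
    exact hG0 _ (Bf_eq_zero_of_nonpos (by linarith [ht.2]))
  have piece3 : ∫ t in (u+h+δ)..τ, G t = 0 := by
    rw [intervalIntegral.integral_congr (g := fun _ => (0:ℝ)) ?_, intervalIntegral.integral_const,
      smul_zero]
    intro t ht
    rw [Set.uIcc_of_le ho4] at ht
    have h1 : u + h + δ ≤ t := ht.1
    have : G t = G ((t - u) + u) := by norm_num
    rw [this]
    exact hG0 _ (Bf_eq_zero_of_ge hh0 hhδ (by linarith))
  have piece1 : ∫ t in u..(u+2*h), G t ≤ 2*h * (S * (2*h/δ)^κ)^(2*p) := by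
    have hb : ∀ t ∈ Set.Icc u (u+2*h), G t ≤ (S * (2*h/δ)^κ)^(2*p) := by
      intro t ht
      have hB : Bf δ κ h (t - u) ≤ (2*h/δ)^κ :=
        Bf_le_head hδ hκ0 hκ1' hh0 (by linarith [ht.2])
      rw [hG]; simp only
      exact Real.rpow_le_rpow (mul_nonneg hS.le (Bf_nonneg hδ hκ0 hh0 _))
        (mul_le_mul_of_nonneg_left hB hS.le) hp0.le
    calc ∫ t in u..(u+2*h), G t ≤ ∫ t in u..(u+2*h), (S * (2*h/δ)^κ)^(2*p) :=
          intervalIntegral.integral_mono_on ho2 (intG _ _) intervalIntegrable_const hb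
      _ = 2*h * (S * (2*h/δ)^κ)^(2*p) := by
          rw [intervalIntegral.integral_const, smul_eq_mul]; ring_nf
  set m : ℝ := 2*p*(1-κ) - 1 with hmdef
  set c2 : ℝ := (S*κ*δ^(-κ)*h)^(2*p) with hc2
  have hSA : (0:ℝ) ≤ S*κ*δ^(-κ)*h :=
    mul_nonneg (mul_nonneg (mul_nonneg hS.le hκ0.le) (Real.rpow_nonneg hδ.le _)) hh0.le
  have hc20 : 0 ≤ c2 := Real.rpow_nonneg hSA _
  have piece2 : ∫ t in (u+2*h)..(u+h+δ), G t ≤ c2 * ((2*h)^(q+1) / m) / 2^q := by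
    set φ : ℝ → ℝ := fun t => c2 * ((t-u)/2)^q with hφ
    have hGφ : ∀ t ∈ Set.Icc (u+2*h) (u+h+δ), G t ≤ φ t := by
      intro t ht
      have hx2h : 2*h ≤ t - u := by linarith [ht.1]
      have hxpos : 0 < t - u := by linarith
      have hB : Bf δ κ h (t-u) ≤ κ*δ^(-κ)*h*((t-u)/2)^(κ-1) :=
        Bf_le_tail hδ hκ0 hh0 hx2h
      have e1 : S * (κ*δ^(-κ)*h*((t-u)/2)^(κ-1)) = (S*κ*δ^(-κ)*h) * ((t-u)/2)^(κ-1) := by ring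
      calc G t ≤ (S * (κ*δ^(-κ)*h*((t-u)/2)^(κ-1)))^(2*p) := by
            rw [hG]; simp only
            exact Real.rpow_le_rpow (mul_nonneg hS.le (Bf_nonneg hδ hκ0 hh0 _))
              (mul_le_mul_of_nonneg_left hB hS.le) hp0.le
        _ = c2 * ((t-u)/2)^q := by
            rw [e1, Real.mul_rpow hSA (Real.rpow_nonneg (by linarith) _),
              ← Real.rpow_mul (by linarith : (0:ℝ) ≤ (t-u)/2), hc2, hq]
        _ = φ t := rfl
    have intφ : IntervalIntegrable φ volume (u+2*h) (u+h+δ) := by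
      apply ContinuousOn.intervalIntegrable
      apply ContinuousOn.mul continuousOn_const
      apply ContinuousOn.rpow_const
      · exact ((continuous_id.sub continuous_const).div_const 2).continuousOn
      · intro t ht
        rw [Set.uIcc_of_le ho3] at ht
        left
        have : 2*h ≤ t - u := by linarith [ht.1]
        exact ne_of_gt (by linarith)
    have step := intervalIntegral.integral_mono_on ho3 (intG _ _) intφ hGφ
    have comp1 : ∫ t in (u+2*h)..(u+h+δ), φ t
        = c2 * ∫ t in (u+2*h)..(u+h+δ), ((t-u)/2)^q :=
      intervalIntegral.integral_const_mul _ _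
    have comp2 : ∫ t in (u+2*h)..(u+h+δ), ((t-u)/2)^q
        = (∫ t in (u+2*h)..(u+h+δ), (t-u)^q) / 2^q := by
      rw [← intervalIntegral.integral_div]
      apply intervalIntegral.integral_congr
      intro t ht
      rw [Set.uIcc_of_le ho3] at ht
      exact Real.div_rpow (by linarith [ht.1]) (by norm_num) q
    have comp3 : ∫ t in (u+2*h)..(u+h+δ), (t-u)^q = ∫ s in (2*h)..(h+δ), s^q := by
      rw [intervalIntegral.integral_comp_sub_right (fun s => s^q) u]
      congr 1 <;> ring
    have comp4 : ∫ s in (2*h)..(h+δ), s^q = ((h+δ)^(q+1) - (2*h)^(q+1))/(q+1) := by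
      apply integral_rpow
      right
      constructor
      · intro hcon; rw [hcon] at hqneg; norm_num at hqneg
      · rw [Set.uIcc_of_le (by linarith)]
        intro hmem
        have := (Set.mem_Icc.mp hmem).1
        linarith
    have comp5 : ((h+δ)^(q+1) - (2*h)^(q+1))/(q+1) ≤ (2*h)^(q+1)/m := by
      have hnum : (0:ℝ) ≤ (h+δ)^(q+1) := Real.rpow_nonneg (by linarith) _
      have e : ((h+δ)^(q+1) - (2*h)^(q+1))/(q+1) = ((2*h)^(q+1) - (h+δ)^(q+1))/m := by
        rw [hq1, div_neg, ← neg_div, neg_sub]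
      rw [e]
      exact (div_le_div_iff_of_pos_right hm).mpr (by linarith)
    have h2q : (0:ℝ) < 2^q := Real.rpow_pos_of_pos (by norm_num) q
    calc ∫ t in (u+2*h)..(u+h+δ), G t ≤ ∫ t in (u+2*h)..(u+h+δ), φ t := step
      _ = c2 * ((∫ s in (2*h)..(h+δ), s^q) / 2^q) := by rw [comp1, comp2, comp3]
      _ ≤ c2 * ((2*h)^(q+1)/m / 2^q) := by
          apply mul_le_mul_of_nonneg_left ?_ hc20
          exact (div_le_div_iff_of_pos_right h2q).mpr (by rw [comp4]; exact comp5)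
      _ = c2 * ((2*h)^(q+1) / m) / 2^q := by ring
  have h2q : (0:ℝ) < 2^q := Real.rpow_pos_of_pos (by norm_num) q
  have A0 : (0:ℝ) ≤ S*κ*δ^(-κ) := mul_nonneg (mul_nonneg hS.le hκ0.le)
    (Real.rpow_nonneg hδ.le _)
  have alg1 : 2*h * (S*(2*h/δ)^κ)^(2*p)
      = (2*S^(2*p)*(2/δ)^(2*p*κ)) * h^(2*p*κ+1) := by
    have h0 : (0:ℝ) ≤ 2*h/δ := by positivity
    have e1 : (S*(2*h/δ)^κ)^(2*p) = S^(2*p) * ((2*h/δ)^κ)^(2*p) :=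
      Real.mul_rpow hS.le (Real.rpow_nonneg h0 _)
    have e2 : ((2*h/δ)^κ)^(2*p) = (2*h/δ)^(2*p*κ) := by
      rw [← Real.rpow_mul h0]
      congr 1; ring
    have eb : 2*h/δ = (2/δ)*h := by ring
    have e3 : (2*h/δ)^(2*p*κ) = (2/δ)^(2*p*κ) * h^(2*p*κ) := by
      rw [eb, Real.mul_rpow (by positivity) hh0.le]
    have e4 : h^(2*p*κ+1) = h^(2*p*κ) * h := Real.rpow_add_one hh0.ne' _
    rw [e1, e2, e3, e4]; ring
  have alg2 : c2 * ((2*h)^(q+1)/m)/2^q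
      = ((S*κ*δ^(-κ))^(2*p)*2/m) * h^(2*p*κ+1) := by
    have e1 : c2 = (S*κ*δ^(-κ))^(2*p) * h^(2*p) := by
      rw [hc2, Real.mul_rpow A0 hh0.le]
    have e2 : (2*h)^(q+1) = 2^q * 2 * h^(q+1) := by
      rw [Real.mul_rpow (by norm_num) hh0.le,
        Real.rpow_add_one (by norm_num : (2:ℝ) ≠ 0)]
    have e3 : h^(2*p) * h^(q+1) = h^(2*p*κ+1) := by
      rw [← Real.rpow_add hh0]
      congr 1; rw [hq]; ring
    calc c2 * ((2*h)^(q+1)/m)/2^q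
        = ((S*κ*δ^(-κ))^(2*p) * 2 / m) * (h^(2*p)*h^(q+1)) * (2^q/2^q) := by
          rw [e1, e2]; ring
      _ = ((S*κ*δ^(-κ))^(2*p)*2/m) * h^(2*p*κ+1) := by
          rw [div_self (ne_of_gt h2q), e3]; ring
  rw [split, piece0, piece3] at step1
  calc ∫ t in (0:ℝ)..τ, F t
      ≤ 2*h * (S*(2*h/δ)^κ)^(2*p) + c2 * ((2*h)^(q+1)/m)/2^q := by
        linarith [piece1, piece2]
    _ = (2*S^(2*p)*(2/δ)^(2*p*κ)) * h^(2*p*κ+1)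
        + ((S*κ*δ^(-κ))^(2*p)*2/m) * h^(2*p*κ+1) := by rw [alg1, alg2]
    _ = (2 * S^(2*p) * (2/δ)^(2*p*κ)
          + (S*κ*δ^(-κ))^(2*p) * 2 / m) * h^(2*p*κ+1) := by ring

lemma abs_S_psi_le {S δ κ : ℝ} (hS : 0 < S) (hδ : 0 < δ) (hκ0 : 0 < κ) (a b : ℝ) :
    |S * (psi δ κ a - psi δ κ b)| ≤ S := by
  rw [abs_mul, abs_of_pos hS]
  have h1 := psi_nonneg hδ κ a
  have h2 := psi_nonneg hδ κ b
  have h3 := psi_le_one hδ hκ0 a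
  have h4 := psi_le_one hδ hκ0 b
  have : |psi δ κ a - psi δ κ b| ≤ 1 := by rw [abs_le]; constructor <;> linarith
  nlinarith

lemma intSpsi {S δ κ u h p : ℝ} (hS : 0 < S) (hδ : 0 < δ) (hκ0 : 0 < κ) (hp : 1 ≤ p)
    (a b : ℝ) :
    IntervalIntegrable (fun t => |S * (psi δ κ (t-u) - psi δ κ (t-u-h))|^(2*p))
      volume a b := by
  apply intervalIntegrable_of_bounded (M := S^(2*p)) (by fun_prop)
  intro t
  rw [abs_of_nonneg (Real.rpow_nonneg (abs_nonneg _) _)]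
  exact Real.rpow_le_rpow (abs_nonneg _) (abs_S_psi_le hS hδ hκ0 _ _) (by linarith)

lemma crude_est {S δ κ u h p τ : ℝ} (hS : 0 < S) (hδ : 0 < δ) (hκ0 : 0 < κ)
    (hp : 1 ≤ p) (hτ : 0 ≤ τ) :
    ∫ t in (0:ℝ)..τ, |S * (psi δ κ (t-u) - psi δ κ (t-u-h))|^(2*p) ≤ τ * S^(2*p) := by
  have hb : ∀ t ∈ Set.Icc (0:ℝ) τ,
      |S * (psi δ κ (t-u) - psi δ κ (t-u-h))|^(2*p) ≤ S^(2*p) := fun t _ =>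
    Real.rpow_le_rpow (abs_nonneg _) (abs_S_psi_le hS hδ hκ0 _ _) (by linarith)
  calc ∫ t in (0:ℝ)..τ, |S * (psi δ κ (t-u) - psi δ κ (t-u-h))|^(2*p)
      ≤ ∫ _ in (0:ℝ)..τ, S^(2*p) :=
        intervalIntegral.integral_mono_on hτ (intSpsi hS hδ hκ0 hp 0 τ)
          intervalIntegrable_const hb
    _ = τ * S^(2*p) := by rw [intervalIntegral.integral_const, smul_eq_mul, sub_zero]

theorem stmt_15 (S lam0 δ τ κ α β : ℝ)
    (hS : 0 < S) (hlam0 : 0 < lam0) (hδ : 0 < δ) (hτ : 0 < τ)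
    (hκ : κ ∈ Set.Ioo (0 : ℝ) (1 / 2)) (hαβ : α < β)
    (hΘ : Set.Ioo (α - δ) (β + δ) ⊆ Set.Ioo 0 (τ - δ)) :
    ∀ p : ℝ, 1 ≤ p → ∃ C : ℝ, 0 < C ∧
      ∀ ϑ₁ ∈ Set.Ioo (α - δ) (β + δ), ∀ ϑ₂ ∈ Set.Ioo (α - δ) (β + δ),
        (∫ t in (0 : ℝ)..τ, |lamT S lam0 δ κ ϑ₁ t - lamT S lam0 δ κ ϑ₂ t| ^ (2 * p)) ≤
          C * |ϑ₁ - ϑ₂| ^ (2 * p * κ + 1) := by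
  obtain ⟨hκ0, hκ1⟩ := hκ
  intro p hp
  have hm : 0 < 2*p*(1-κ) - 1 := by nlinarith
  set C1 : ℝ := 2 * S^(2*p) * (2/δ)^(2*p*κ)
      + (S*κ*δ^(-κ))^(2*p) * 2 / (2*p*(1-κ) - 1) with hC1
  set C2 : ℝ := τ * S^(2*p) / δ^(2*p*κ+1) with hC2
  have hC10 : 0 < C1 := by
    have h1 : (0:ℝ) < S^(2*p) := Real.rpow_pos_of_pos hS _
    have h2 : (0:ℝ) < (2/δ)^(2*p*κ) := Real.rpow_pos_of_pos (by positivity) _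
    have h3 : (0:ℝ) ≤ (S*κ*δ^(-κ))^(2*p) := Real.rpow_nonneg
      (mul_nonneg (mul_nonneg hS.le hκ0.le) (Real.rpow_nonneg hδ.le _)) _
    have h4 : (0:ℝ) ≤ (S*κ*δ^(-κ))^(2*p) * 2 / (2*p*(1-κ) - 1) := by positivity
    rw [hC1]; nlinarith
  have hC20 : 0 < C2 := by
    have h1 : (0:ℝ) < S^(2*p) := Real.rpow_pos_of_pos hS _
    have h2 : (0:ℝ) < δ^(2*p*κ+1) := Real.rpow_pos_of_pos hδ _
    rw [hC2]; positivity
  refine ⟨C1 + C2, by linarith, ?_⟩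
  intro ϑ₁ hϑ₁ ϑ₂ hϑ₂
  rcases eq_or_ne ϑ₁ ϑ₂ with heq | hne
  · subst heq
    have hlhs : ∫ t in (0:ℝ)..τ, |lamT S lam0 δ κ ϑ₁ t - lamT S lam0 δ κ ϑ₁ t| ^ (2*p)
        = 0 := by
      have : ∀ t : ℝ, |lamT S lam0 δ κ ϑ₁ t - lamT S lam0 δ κ ϑ₁ t| ^ (2*p) = 0 := by
        intro t
        rw [sub_self, abs_zero, Real.zero_rpow (by positivity)]
      simp only [this, intervalIntegral.integral_const, smul_zero]
    rw [hlhs, sub_self, abs_zero, Real.zero_rpow (by positivity), mul_zero]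
  · set u : ℝ := min ϑ₁ ϑ₂ with hudef
    set h : ℝ := |ϑ₁ - ϑ₂| with hhdef
    have hh0 : 0 < h := abs_pos.mpr (sub_ne_zero.mpr hne)
    have hmem1 := hΘ hϑ₁
    have hmem2 := hΘ hϑ₂
    have hu0 : 0 < u := lt_min hmem1.1 hmem2.1
    have huh : u + h = max ϑ₁ ϑ₂ := by
      rcases le_total ϑ₁ ϑ₂ with hc | hc
      · rw [hudef, hhdef, min_eq_left hc, max_eq_right hc, abs_of_nonpos (by linarith)]
        ring
      · rw [hudef, hhdef, min_eq_right hc, max_eq_left hc, abs_of_nonneg (by linarith)]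
        ring
    have huhτ : u + h + δ ≤ τ := by
      rcases max_cases ϑ₁ ϑ₂ with ⟨he, _⟩ | ⟨he, _⟩ <;> rw [huh, he] <;>
        [linarith [hmem1.2]; linarith [hmem2.2]]
    -- rewrite the integrand
    have hint : ∫ t in (0:ℝ)..τ, |lamT S lam0 δ κ ϑ₁ t - lamT S lam0 δ κ ϑ₂ t| ^ (2*p)
        = ∫ t in (0:ℝ)..τ, |S * (psi δ κ (t - u) - psi δ κ (t - u - h))| ^ (2*p) := by
      apply intervalIntegral.integral_congr
      intro t _
      show |lamT S lam0 δ κ ϑ₁ t - lamT S lam0 δ κ ϑ₂ t| ^ (2*p)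
        = |S * (psi δ κ (t - u) - psi δ κ (t - u - h))| ^ (2*p)
      have e0 : lamT S lam0 δ κ ϑ₁ t - lamT S lam0 δ κ ϑ₂ t
          = S * (psi δ κ (t - ϑ₁) - psi δ κ (t - ϑ₂)) := by
        unfold lamT; ring
      rcases le_total ϑ₁ ϑ₂ with hc | hc
      · have hu : u = ϑ₁ := min_eq_left hc
        have hh : h = ϑ₂ - ϑ₁ := by rw [hhdef, abs_of_nonpos (by linarith)]; ring
        rw [e0, hu, hh]
        norm_num
      · have hu : u = ϑ₂ := min_eq_right hc
        have hh : h = ϑ₁ - ϑ₂ := by rw [hhdef, abs_of_nonneg (by linarith)]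
        rw [e0, abs_mul, abs_sub_comm (psi δ κ (t - ϑ₁)), ← abs_mul, hu, hh]
        norm_num
    rw [hint]
    rcases le_or_gt h δ with hcase | hcase
    · -- main case
      have := main_est hS hδ hκ0 hκ1 hp hh0 hcase hu0 huhτ
      have hpow : (0:ℝ) ≤ h^(2*p*κ+1) := Real.rpow_nonneg hh0.le _
      calc ∫ t in (0:ℝ)..τ, |S * (psi δ κ (t - u) - psi δ κ (t - u - h))| ^ (2*p)
          ≤ C1 * h^(2*p*κ+1) := this
        _ ≤ (C1 + C2) * h^(2*p*κ+1) := by nlinarith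
    · -- crude case
      have hτ0 : (0:ℝ) ≤ τ := hτ.le
      have crude := crude_est (u := u) (h := h) hS hδ hκ0 hp hτ0
      have hpow : δ^(2*p*κ+1) ≤ h^(2*p*κ+1) :=
        Real.rpow_le_rpow hδ.le hcase.le (by positivity)
      have hδpow : (0:ℝ) < δ^(2*p*κ+1) := Real.rpow_pos_of_pos hδ _
      have key : τ * S^(2*p) ≤ C2 * h^(2*p*κ+1) := by
        rw [hC2]
        rw [div_mul_eq_mul_div, le_div_iff₀ hδpow]
        have hS2 : (0:ℝ) < S^(2*p) := Real.rpow_pos_of_pos hS _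
        nlinarith [mul_le_mul_of_nonneg_left hpow (mul_nonneg hτ0 hS2.le)]
      have hpow0 : (0:ℝ) ≤ h^(2*p*κ+1) := Real.rpow_nonneg hh0.le _
      calc ∫ t in (0:ℝ)..τ, |S * (psi δ κ (t - u) - psi δ κ (t - u - h))| ^ (2*p)
          ≤ τ * S^(2*p) := crude
        _ ≤ C2 * h^(2*p*κ+1) := key
        _ ≤ (C1 + C2) * h^(2*p*κ+1) := by nlinarith
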